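/- arXiv:1604.08361 — 6 statements merged into one kernel-verified Lean document; each statement's English description precedes it below -/
import Mathlib

section
/- Let U ⊆ ℝ² be open, let h : U → ℝ be twice continuously differentiable, and let λ1, λ2 : U → ℝ be differentiable functions such that at every point of U one has λi² = ∂h/∂x + (∂h/∂y)·λi for i = 1, 2, and λ1 ≠ λ2 at every point of U. Then the two conditions ∂λi/∂x + λi·∂λi/∂y = 0 on U for i = 1, 2 hold if and only if h satisfies the completely exceptional system on U. -/
section Aux

variable {U : Set (ℝ × ℝ)} {h l : ℝ × ℝ → ℝ} {p : ℝ × ℝ}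

/-- fderiv of the directional derivative function equals second derivative applied. -/
lemma aux_fderiv_dir (hΦ : DifferentiableAt ℝ (fderiv ℝ h) p) (v w : ℝ × ℝ) :
    fderiv ℝ (fun q => fderiv ℝ h q v) p w = fderiv ℝ (fderiv ℝ h) p w v := by
  have H : HasFDerivAt (fun q => fderiv ℝ h q v)
      ((fderiv ℝ h p).comp (0 : (ℝ × ℝ) →L[ℝ] (ℝ × ℝ)) +
        (fderiv ℝ (fderiv ℝ h) p).flip v) p :=
    hΦ.hasFDerivAt.clm_apply (hasFDerivAt_const v p)
  rw [H.fderiv]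
  simp

/-- Differentiating the characteristic identity. -/
lemma aux_key (hU : IsOpen U) (hh : ContDiffOn ℝ 2 h U)
    (hl : DifferentiableOn ℝ l U)
    (hchar : ∀ q ∈ U, (l q) ^ 2 = fderiv ℝ h q (1, 0) + fderiv ℝ h q (0, 1) * l q)
    (hp : p ∈ U) (w : ℝ × ℝ) :
    (2 * l p - fderiv ℝ h p (0, 1)) * fderiv ℝ l p w
      = fderiv ℝ (fun q => fderiv ℝ h q (1, 0)) p w
        + l p * fderiv ℝ (fun q => fderiv ℝ h q (0, 1)) p w := by
  have hmem : U ∈ nhds p := hU.mem_nhds hp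
  have hlp : DifferentiableAt ℝ l p := (hl.differentiableAt hmem)
  have hΦ : DifferentiableAt ℝ (fderiv ℝ h) p := by
    have h2 : ContDiffAt ℝ 2 h p := hh.contDiffAt hmem
    exact (h2.fderiv_right (m := 1) le_rfl).differentiableAt one_ne_zero
  have ha : DifferentiableAt ℝ (fun q => fderiv ℝ h q (1, 0)) p :=
    hΦ.clm_apply (differentiableAt_const _)
  have hb : DifferentiableAt ℝ (fun q => fderiv ℝ h q (0, 1)) p :=
    hΦ.clm_apply (differentiableAt_const _)
  have H1 : HasFDerivAt (fun q => l q * l q)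
      (l p • fderiv ℝ l p + l p • fderiv ℝ l p) p :=
    hlp.hasFDerivAt.mul hlp.hasFDerivAt
  have H2 : HasFDerivAt (fun q => fderiv ℝ h q (1, 0) + fderiv ℝ h q (0, 1) * l q)
      (fderiv ℝ (fun q => fderiv ℝ h q (1, 0)) p
        + (fderiv ℝ h p (0, 1) • fderiv ℝ l p
            + l p • fderiv ℝ (fun q => fderiv ℝ h q (0, 1)) p)) p :=
    ha.hasFDerivAt.add (hb.hasFDerivAt.mul hlp.hasFDerivAt)
  have heq : (fun q => l q * l q)
      =ᶠ[nhds p] fun q => fderiv ℝ h q (1, 0) + fderiv ℝ h q (0, 1) * l q := by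
    filter_upwards [hmem] with q hq
    have := hchar q hq
    nlinarith [this]
  have H1' : HasFDerivAt (fun q => fderiv ℝ h q (1, 0) + fderiv ℝ h q (0, 1) * l q)
      (l p • fderiv ℝ l p + l p • fderiv ℝ l p) p := H1.congr_of_eventuallyEq heq.symm
  have hE := H1'.unique H2
  have := congrFun (congrArg (fun (L : (ℝ × ℝ) →L[ℝ] ℝ) => (L : (ℝ × ℝ) → ℝ)) hE) w
  simp only [ContinuousLinearMap.add_apply, ContinuousLinearMap.coe_smul',
    Pi.smul_apply, smul_eq_mul] at this
  linarith

end Aux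

/-- Let `h` be `C²` on the open set `U ⊆ ℝ²` and let `λ1, λ2` be
differentiable functions on `U` which at every point are the two distinct roots of the
characteristic equation `λ² = h_x + h_y·λ`.  Then the complete exceptionality conditions
`∂λi/∂x + λi·∂λi/∂y = 0` (i = 1,2) hold on `U` iff `h` satisfies the completely
exceptional system `h_xx + h_x·h_yy = 0`, `2h_xy + h_y·h_yy = 0` on `U`. -/
theorem completely_exceptional_iff_roots_have_zero_acceleration
    (U : Set (ℝ × ℝ)) (hU : IsOpen U)
    (h l1 l2 : ℝ × ℝ → ℝ)
    (hh : ContDiffOn ℝ 2 h U)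
    (hl1 : DifferentiableOn ℝ l1 U) (hl2 : DifferentiableOn ℝ l2 U)
    (hchar1 : ∀ p ∈ U, (l1 p) ^ 2 = fderiv ℝ h p (1, 0) + fderiv ℝ h p (0, 1) * l1 p)
    (hchar2 : ∀ p ∈ U, (l2 p) ^ 2 = fderiv ℝ h p (1, 0) + fderiv ℝ h p (0, 1) * l2 p)
    (hne : ∀ p ∈ U, l1 p ≠ l2 p) :
    (∀ p ∈ U,
        fderiv ℝ l1 p (1, 0) + l1 p * fderiv ℝ l1 p (0, 1) = 0 ∧
        fderiv ℝ l2 p (1, 0) + l2 p * fderiv ℝ l2 p (0, 1) = 0) ↔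
    (∀ p ∈ U,
        fderiv ℝ (fun q => fderiv ℝ h q (1, 0)) p (1, 0) +
            fderiv ℝ h p (1, 0) * fderiv ℝ (fun q => fderiv ℝ h q (0, 1)) p (0, 1) = 0 ∧
        2 * fderiv ℝ (fun q => fderiv ℝ h q (0, 1)) p (1, 0) +
            fderiv ℝ h p (0, 1) * fderiv ℝ (fun q => fderiv ℝ h q (0, 1)) p (0, 1) = 0) := by
  -- common setup at each point
  have setup : ∀ p ∈ U,
      fderiv ℝ (fun q => fderiv ℝ h q (1, 0)) p (0, 1)
        = fderiv ℝ (fun q => fderiv ℝ h q (0, 1)) p (1, 0) ∧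
      fderiv ℝ h p (0, 1) = l1 p + l2 p := by
    intro p hp
    have hmem : U ∈ nhds p := hU.mem_nhds hp
    have hΦ : DifferentiableAt ℝ (fderiv ℝ h) p := by
      have h2 : ContDiffAt ℝ 2 h p := hh.contDiffAt hmem
      exact (h2.fderiv_right (m := 1) le_rfl).differentiableAt one_ne_zero
    have hsymm : IsSymmSndFDerivAt ℝ h p :=
      (hh.contDiffAt hmem).isSymmSndFDerivAt (by simp)
    constructor
    · rw [aux_fderiv_dir hΦ, aux_fderiv_dir hΦ]
      exact hsymm.eq _ _
    · have h1 := hchar1 p hp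
      have h2 := hchar2 p hp
      have hd : l1 p - l2 p ≠ 0 := sub_ne_zero.mpr (hne p hp)
      have : (l1 p - l2 p) * (fderiv ℝ h p (0, 1) - (l1 p + l2 p)) = 0 := by ring_nf; nlinarith [h1, h2]
      rcases mul_eq_zero.mp this with h' | h'
      · exact absurd h' hd
      · linarith
  constructor
  · intro hexc p hp
    obtain ⟨hsymm, hb⟩ := setup p hp
    obtain ⟨he1, he2⟩ := hexc p hp
    have k110 := aux_key hU hh hl1 hchar1 hp (1, 0)
    have k101 := aux_key hU hh hl1 hchar1 hp (0, 1)
    have k210 := aux_key hU hh hl2 hchar2 hp (1, 0)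
    have k201 := aux_key hU hh hl2 hchar2 hp (0, 1)
    have hc1 := hchar1 p hp
    have hc2 := hchar2 p hp
    have hd : l1 p - l2 p ≠ 0 := sub_ne_zero.mpr (hne p hp)
    set a1 := fderiv ℝ (fun q => fderiv ℝ h q (1, 0)) p (1, 0) with ha1
    set a2 := fderiv ℝ (fun q => fderiv ℝ h q (1, 0)) p (0, 1) with ha2
    set b1 := fderiv ℝ (fun q => fderiv ℝ h q (0, 1)) p (1, 0) with hb1
    set b2 := fderiv ℝ (fun q => fderiv ℝ h q (0, 1)) p (0, 1) with hb2
    -- A + l1 B = 0 and A + l2 B = 0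
    have E1 : (a1 + fderiv ℝ h p (1, 0) * b2) + l1 p * (2 * b1 + fderiv ℝ h p (0, 1) * b2) = 0 := by
      have : (l1 p - l2 p) * (fderiv ℝ l1 p (1, 0) + l1 p * fderiv ℝ l1 p (0, 1))
          = (a1 + fderiv ℝ h p (1, 0) * b2) + l1 p * (2 * b1 + fderiv ℝ h p (0, 1) * b2) := by
        linear_combination k110 + l1 p * k101 + l1 p * hsymm + b2 * hc1 +
          (fderiv ℝ l1 p (1, 0) + l1 p * fderiv ℝ l1 p (0, 1)) * hb
      rw [he1] at this
      linarith [this]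
    have E2 : (a1 + fderiv ℝ h p (1, 0) * b2) + l2 p * (2 * b1 + fderiv ℝ h p (0, 1) * b2) = 0 := by
      have : (l2 p - l1 p) * (fderiv ℝ l2 p (1, 0) + l2 p * fderiv ℝ l2 p (0, 1))
          = (a1 + fderiv ℝ h p (1, 0) * b2) + l2 p * (2 * b1 + fderiv ℝ h p (0, 1) * b2) := by
        linear_combination k210 + l2 p * k201 + l2 p * hsymm + b2 * hc2 +
          (fderiv ℝ l2 p (1, 0) + l2 p * fderiv ℝ l2 p (0, 1)) * hb
      rw [he2] at this
      linarith [this]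
    have hB : 2 * b1 + fderiv ℝ h p (0, 1) * b2 = 0 := by
      have : (l1 p - l2 p) * (2 * b1 + fderiv ℝ h p (0, 1) * b2) = 0 := by linarith [E1, E2]
      rcases mul_eq_zero.mp this with h' | h'
      · exact absurd h' hd
      · exact h'
    refine ⟨?_, hB⟩
    have := E1
    rw [hB] at this
    linarith [this]
  · intro hce p hp
    obtain ⟨hsymm, hb⟩ := setup p hp
    obtain ⟨hA, hB⟩ := hce p hp
    have k110 := aux_key hU hh hl1 hchar1 hp (1, 0)
    have k101 := aux_key hU hh hl1 hchar1 hp (0, 1)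
    have k210 := aux_key hU hh hl2 hchar2 hp (1, 0)
    have k201 := aux_key hU hh hl2 hchar2 hp (0, 1)
    have hc1 := hchar1 p hp
    have hc2 := hchar2 p hp
    have hd : l1 p - l2 p ≠ 0 := sub_ne_zero.mpr (hne p hp)
    constructor
    · have key : (l1 p - l2 p) * (fderiv ℝ l1 p (1, 0) + l1 p * fderiv ℝ l1 p (0, 1)) = 0 := by
        linear_combination k110 + l1 p * k101 + l1 p * hsymm +
          (fderiv ℝ (fun q => fderiv ℝ h q (0, 1)) p (0, 1)) * hc1 +
          (fderiv ℝ l1 p (1, 0) + l1 p * fderiv ℝ l1 p (0, 1)) * hb + hA + l1 p * hB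
      rcases mul_eq_zero.mp key with h' | h'
      · exact absurd h' hd
      · exact h'
    · have key : (l2 p - l1 p) * (fderiv ℝ l2 p (1, 0) + l2 p * fderiv ℝ l2 p (0, 1)) = 0 := by
        linear_combination k210 + l2 p * k201 + l2 p * hsymm +
          (fderiv ℝ (fun q => fderiv ℝ h q (0, 1)) p (0, 1)) * hc2 +
          (fderiv ℝ l2 p (1, 0) + l2 p * fderiv ℝ l2 p (0, 1)) * hb + hA + l2 p * hB
      have hd' : l2 p - l1 p ≠ 0 := fun hx => hd (by linarith [hx, sub_eq_zero.mp hx])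
      rcases mul_eq_zero.mp key with h' | h'
      · exact absurd h' hd'
      · exact h'
end

section
/- Let k0, k1, k2, k3, k4 ∈ ℝ and let U = {(x,y) ∈ ℝ² : k0·x + k3 ≠ 0}. Define h : U → ℝ by h(x,y) = (k0·y² − k1·x − k2·y − k4)/(k0·x + k3) (so that p22 = h solves the Monge–Ampère equation k0(p11·p22 − p12²) + k1·p11 + k2·p12 + k3·p22 + k4 = 0). Then h satisfies the completely exceptional system at every point of U. -/
/-- The function `h` solving the Monge–Ampère equation
`k0(p11·p22 − p12²) + k1·p11 + k2·p12 + k3·p22 + k4 = 0` for `p22`,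
as a function of `(x, y) = (p11, p12)`. -/
noncomputable def hMA (k0 k1 k2 k3 k4 : ℝ) (q : ℝ × ℝ) : ℝ :=
  (k0 * q.2 ^ 2 - k1 * q.1 - k2 * q.2 - k4) / (k0 * q.1 + k3)

lemma myHasFDerivAt_div {E : Type*} [NormedAddCommGroup E] [NormedSpace ℝ E]
    {f g : E → ℝ} {f' g' : E →L[ℝ] ℝ} {x : E}
    (hf : HasFDerivAt f f' x) (hg : HasFDerivAt g g' x) (hx : g x ≠ 0) :
    HasFDerivAt (fun q => f q / g q) ((g x)⁻¹ • f' - (f x / (g x) ^ 2) • g') x := by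
  have hinv : HasFDerivAt (fun q => (g q)⁻¹)
      ((-(ContinuousLinearMap.mulLeftRight ℝ ℝ (g x)⁻¹ (g x)⁻¹)).comp g') x :=
    (hasFDerivAt_inv' hx).comp x hg
  have h : HasFDerivAt (fun q => f q * (g q)⁻¹) _ x := hf.mul hinv
  have heq : (fun q => f q / g q) = fun q => f q * (g q)⁻¹ := by
    funext q; rw [div_eq_mul_inv]
  rw [heq]
  convert h using 1
  rotate_left
  ext v
  simp [ContinuousLinearMap.mulLeftRight_apply]
  field_simp
  ring
  rfl

section Aux

variable (k0 k1 k2 k3 k4 : ℝ)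

/-- Derivative of the denominator. -/
lemma hMA_den_fd (q : ℝ × ℝ) :
    HasFDerivAt (fun q : ℝ × ℝ => k0 * q.1 + k3)
      (k0 • ContinuousLinearMap.fst ℝ ℝ ℝ) q :=
  (hasFDerivAt_fst.const_mul k0).add_const k3

/-- Derivative of `q.2 ^ 2`. -/
lemma hMA_sq_fd (q : ℝ × ℝ) :
    HasFDerivAt (fun q : ℝ × ℝ => q.2 ^ 2)
      (q.2 • ContinuousLinearMap.snd ℝ ℝ ℝ + q.2 • ContinuousLinearMap.snd ℝ ℝ ℝ) q := by
  have : HasFDerivAt (fun y : ℝ × ℝ => y.2 * y.2) _ q :=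
    (hasFDerivAt_snd (𝕜 := ℝ) (E := ℝ) (F := ℝ) (p := q)).mul hasFDerivAt_snd
  simpa [pow_two] using this

/-- Derivative of the numerator. -/
lemma hMA_num_fd (q : ℝ × ℝ) :
    HasFDerivAt (fun q : ℝ × ℝ => k0 * q.2 ^ 2 - k1 * q.1 - k2 * q.2 - k4)
      (k0 • (q.2 • ContinuousLinearMap.snd ℝ ℝ ℝ + q.2 • ContinuousLinearMap.snd ℝ ℝ ℝ)
        - k1 • ContinuousLinearMap.fst ℝ ℝ ℝ - k2 • ContinuousLinearMap.snd ℝ ℝ ℝ) q :=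
  ((((hMA_sq_fd q).const_mul k0).sub (hasFDerivAt_fst.const_mul k1)).sub
    (hasFDerivAt_snd.const_mul k2)).sub_const k4

/-- First partial derivatives of `hMA`. -/
lemma fderiv_hMA_apply (q : ℝ × ℝ) (hq : k0 * q.1 + k3 ≠ 0) :
    fderiv ℝ (hMA k0 k1 k2 k3 k4) q (1, 0) =
      (-(k1 * (k0 * q.1 + k3)) - k0 * (k0 * q.2 ^ 2 - k1 * q.1 - k2 * q.2 - k4)) /
        (k0 * q.1 + k3) ^ 2 ∧
    fderiv ℝ (hMA k0 k1 k2 k3 k4) q (0, 1) =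
      (2 * k0 * q.2 - k2) / (k0 * q.1 + k3) := by
  have h := myHasFDerivAt_div (hMA_num_fd k0 k1 k2 k4 q) (hMA_den_fd k0 k3 q) hq
  have hf : fderiv ℝ (hMA k0 k1 k2 k3 k4) q = _ := HasFDerivAt.fderiv h
  rw [hf]
  simp only [ContinuousLinearMap.smul_apply, ContinuousLinearMap.sub_apply,
    ContinuousLinearMap.add_apply, ContinuousLinearMap.coe_fst', ContinuousLinearMap.coe_snd',
    smul_eq_mul]
  constructor <;> · field_simp; ring

end Aux

/-- the solution `h` of a Monge–Ampère equation satisfies the completely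
exceptional system `h_xx + h_x·h_yy = 0`, `2h_xy + h_y·h_yy = 0` at every point where
`k0·x + k3 ≠ 0`. -/
theorem mongeAmpere_solution_is_completely_exceptional
    (k0 k1 k2 k3 k4 : ℝ) (p : ℝ × ℝ) (hp : k0 * p.1 + k3 ≠ 0) :
    fderiv ℝ (fun q => fderiv ℝ (hMA k0 k1 k2 k3 k4) q (1, 0)) p (1, 0) +
        fderiv ℝ (hMA k0 k1 k2 k3 k4) p (1, 0) *
          fderiv ℝ (fun q => fderiv ℝ (hMA k0 k1 k2 k3 k4) q (0, 1)) p (0, 1) = 0 ∧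
    2 * fderiv ℝ (fun q => fderiv ℝ (hMA k0 k1 k2 k3 k4) q (0, 1)) p (1, 0) +
        fderiv ℝ (hMA k0 k1 k2 k3 k4) p (0, 1) *
          fderiv ℝ (fun q => fderiv ℝ (hMA k0 k1 k2 k3 k4) q (0, 1)) p (0, 1) = 0 := by
  obtain ⟨hx, hy⟩ := fderiv_hMA_apply k0 k1 k2 k3 k4 p hp
  -- the denominator is nonzero in a neighborhood of p
  have hev : ∀ᶠ q in nhds p, k0 * q.1 + k3 ≠ 0 := by
    have hc : ContinuousAt (fun q : ℝ × ℝ => k0 * q.1 + k3) p := by fun_prop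
    exact hc.eventually_ne hp
  have e1 : (fun q => fderiv ℝ (hMA k0 k1 k2 k3 k4) q (1, 0)) =ᶠ[nhds p]
      (fun q : ℝ × ℝ =>
        (-(k1 * (k0 * q.1 + k3)) - k0 * (k0 * q.2 ^ 2 - k1 * q.1 - k2 * q.2 - k4)) /
          (k0 * q.1 + k3) ^ 2) :=
    hev.mono fun q hq => (fderiv_hMA_apply k0 k1 k2 k3 k4 q hq).1
  have e2 : (fun q => fderiv ℝ (hMA k0 k1 k2 k3 k4) q (0, 1)) =ᶠ[nhds p]
      (fun q : ℝ × ℝ => (2 * k0 * q.2 - k2) / (k0 * q.1 + k3)) :=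
    hev.mono fun q hq => (fderiv_hMA_apply k0 k1 k2 k3 k4 q hq).2
  rw [hx, hy, e1.fderiv_eq, e2.fderiv_eq]
  -- derivative of the first partial derivative
  have hden : HasFDerivAt (fun q : ℝ × ℝ => (k0 * q.1 + k3) ^ 2)
      ((k0 * p.1 + k3) • (k0 • ContinuousLinearMap.fst ℝ ℝ ℝ) +
        (k0 * p.1 + k3) • (k0 • ContinuousLinearMap.fst ℝ ℝ ℝ)) p := by
    have : HasFDerivAt (fun q : ℝ × ℝ => (k0 * q.1 + k3) * (k0 * q.1 + k3)) _ p :=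
      (hMA_den_fd k0 k3 p).mul (hMA_den_fd k0 k3 p)
    simpa [pow_two] using this
  have hu := (((hMA_den_fd k0 k3 p).const_mul k1).neg).sub ((hMA_num_fd k0 k1 k2 k4 p).const_mul k0)
  have hgx : fderiv ℝ (fun q : ℝ × ℝ =>
      (-(k1 * (k0 * q.1 + k3)) - k0 * (k0 * q.2 ^ 2 - k1 * q.1 - k2 * q.2 - k4)) /
        (k0 * q.1 + k3) ^ 2) p = _ :=
    HasFDerivAt.fderiv (myHasFDerivAt_div hu hden (pow_ne_zero 2 hp))
  have hv := ((hasFDerivAt_snd (𝕜 := ℝ) (E := ℝ) (F := ℝ) (p := p)).const_mul (2 * k0)).sub_const k2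
  have hgy : fderiv ℝ (fun q : ℝ × ℝ => (2 * k0 * q.2 - k2) / (k0 * q.1 + k3)) p = _ :=
    HasFDerivAt.fderiv (myHasFDerivAt_div hv (hMA_den_fd k0 k3 p) hp)
  rw [hgx, hgy]
  simp only [ContinuousLinearMap.smul_apply, ContinuousLinearMap.sub_apply,
    ContinuousLinearMap.add_apply, ContinuousLinearMap.neg_apply, ContinuousLinearMap.coe_fst',
    ContinuousLinearMap.coe_snd', smul_eq_mul]
  constructor <;> · field_simp; ring
end

section
/- Let k0, k1, k2, k3, k4 ∈ ℝ, let U = {(x,y) ∈ ℝ² : k0·x + k3 ≠ 0}, and define h : U → ℝ by h(x,y) = (k0·y² − k1·x − k2·y − k4)/(k0·x + k3). Set Δ = k2² − 4·k1·k3 + 4·k0·k4. Then at every point of U one has 4·(∂h/∂x) + (∂h/∂y)² = Δ/(k0·x + k3)². -/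
/-- for the solution `h` of a Monge–Ampère equation with discriminant
`Δ = k2² − 4k1k3 + 4k0k4`, at every point where `k0·x + k3 ≠ 0` one has
`4·h_x + (h_y)² = Δ/(k0·x + k3)²`. -/
theorem mongeAmpere_discriminant_identity
    (k0 k1 k2 k3 k4 : ℝ) (p : ℝ × ℝ) (hp : k0 * p.1 + k3 ≠ 0) :
    4 * fderiv ℝ (hMA k0 k1 k2 k3 k4) p (1, 0) +
        (fderiv ℝ (hMA k0 k1 k2 k3 k4) p (0, 1)) ^ 2 =
      (k2 ^ 2 - 4 * k1 * k3 + 4 * k0 * k4) / (k0 * p.1 + k3) ^ 2 := by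
  have h1 : HasFDerivAt (fun q : ℝ × ℝ => q.1) (ContinuousLinearMap.fst ℝ ℝ ℝ) p :=
    hasFDerivAt_fst
  have h2 : HasFDerivAt (fun q : ℝ × ℝ => q.2) (ContinuousLinearMap.snd ℝ ℝ ℝ) p :=
    hasFDerivAt_snd
  have hN : HasFDerivAt (fun q : ℝ × ℝ => k0 * (q.2 * q.2) - k1 * q.1 - k2 * q.2 - k4)
      ((k0 • (p.2 • ContinuousLinearMap.snd ℝ ℝ ℝ + p.2 • ContinuousLinearMap.snd ℝ ℝ ℝ)
        - k1 • ContinuousLinearMap.fst ℝ ℝ ℝ) - k2 • ContinuousLinearMap.snd ℝ ℝ ℝ) p := by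
    have := (((h2.mul h2).const_mul k0).sub (h1.const_mul k1)).sub (h2.const_mul k2)
    simpa [smul_smul] using this.sub_const k4
  have hD : HasFDerivAt (fun q : ℝ × ℝ => k0 * q.1 + k3)
      (k0 • ContinuousLinearMap.fst ℝ ℝ ℝ) p := (h1.const_mul k0).add_const k3
  have hInv := (hasDerivAt_inv hp).comp_hasFDerivAt p hD
  have hQ := hN.mul hInv
  have heq : hMA k0 k1 k2 k3 k4 = fun q : ℝ × ℝ =>
      (k0 * (q.2 * q.2) - k1 * q.1 - k2 * q.2 - k4) * (k0 * q.1 + k3)⁻¹ := by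
    funext q; simp [hMA, div_eq_mul_inv, sq]
  simp only [Function.comp_def, Pi.mul_def] at hQ
  rw [heq, hQ.fderiv]
  simp only [ContinuousLinearMap.smul_apply, ContinuousLinearMap.add_apply,
    ContinuousLinearMap.sub_apply, ContinuousLinearMap.coe_fst', ContinuousLinearMap.coe_snd',
    ContinuousLinearMap.comp_apply, smul_eq_mul]
  field_simp
  ring
end

section
/- Let U ⊆ ℝ³ be open and let F : U → ℝ be twice continuously differentiable, with variables denoted (p11, p12, p22). Assume that ∂F/∂p22 ≠ 0 at every point of U and that (∂F/∂p12)² = 4·(∂F/∂p11)·(∂F/∂p22) at every point of U. Define λ : U → ℝ by λ = −(∂F/∂p12)/(2·∂F/∂p22). Then ∂λ/∂p11 + λ·(∂λ/∂p12) + λ²·(∂λ/∂p22) = 0 at every point of U. -/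
set_option maxHeartbeats 1000000

/-- parabolic second-order PDEs are completely exceptional.  If `F` is `C²`
on the open set `U ⊆ ℝ³` (variables `(p11, p12, p22)`), with `F_{p22} ≠ 0` and
`(F_{p12})² = 4·F_{p11}·F_{p22}` on `U`, then the unique characteristic root
`λ = −F_{p12}/(2F_{p22})` satisfies `λ_{p11} + λ·λ_{p12} + λ²·λ_{p22} = 0` on `U`. -/
theorem parabolic_is_completely_exceptional
    (U : Set (ℝ × ℝ × ℝ)) (hU : IsOpen U) (F : ℝ × ℝ × ℝ → ℝ)
    (hF : ContDiffOn ℝ 2 F U)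
    (hF3 : ∀ p ∈ U, fderiv ℝ F p (0, 0, 1) ≠ 0)
    (hdisc : ∀ p ∈ U,
        (fderiv ℝ F p (0, 1, 0)) ^ 2 = 4 * fderiv ℝ F p (1, 0, 0) * fderiv ℝ F p (0, 0, 1)) :
    let lam : ℝ × ℝ × ℝ → ℝ := fun q => -(fderiv ℝ F q (0, 1, 0)) / (2 * fderiv ℝ F q (0, 0, 1))
    ∀ p ∈ U,
      fderiv ℝ lam p (1, 0, 0) + lam p * fderiv ℝ lam p (0, 1, 0) +
        (lam p) ^ 2 * fderiv ℝ lam p (0, 0, 1) = 0 := by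
  intro lam p hp
  have hFp : ContDiffAt ℝ 2 F p := hF.contDiffAt (hU.mem_nhds hp)
  have hd : DifferentiableAt ℝ (fderiv ℝ F) p := by
    have : ContDiffAt ℝ 1 (fderiv ℝ F) p := hFp.fderiv_right (by norm_num)
    exact this.differentiableAt one_ne_zero
  set H : (ℝ × ℝ × ℝ) →L[ℝ] (ℝ × ℝ × ℝ) →L[ℝ] ℝ := fderiv ℝ (fderiv ℝ F) p with hH
  have hsymm : ∀ v w, H v w = H w v := hFp.isSymmSndFDerivAt (by simp)
  have hder : ∀ v : ℝ × ℝ × ℝ, HasFDerivAt (fun q => fderiv ℝ F q v) (H.flip v) p := by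
    intro v
    have := hd.hasFDerivAt.clm_apply (hasFDerivAt_const v p)
    simpa using this
  set a : ℝ := fderiv ℝ F p (1, 0, 0) with ha
  set b : ℝ := fderiv ℝ F p (0, 1, 0) with hb
  set c : ℝ := fderiv ℝ F p (0, 0, 1) with hc
  have hc0 : c ≠ 0 := hF3 p hp
  -- derivative of the discriminant function is zero
  have hGd : HasFDerivAt
      (fun q => (fderiv ℝ F q (0, 1, 0)) ^ 2
        - 4 * fderiv ℝ F q (1, 0, 0) * fderiv ℝ F q (0, 0, 1))
      ((b • H.flip (0,1,0) + b • H.flip (0,1,0))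
        - ((4 * a) • H.flip (0,0,1) + c • ((4:ℝ) • H.flip (1,0,0)))) p := by
    have h2 : HasFDerivAt (fun q => (fderiv ℝ F q (0,1,0)) * (fderiv ℝ F q (0,1,0)))
        (b • H.flip (0,1,0) + b • H.flip (0,1,0)) p := (hder (0,1,0)).mul (hder (0,1,0))
    have h3 := (((hder (1,0,0)).const_mul 4).mul (hder (0,0,1)))
    have := h2.sub h3
    simp only [pow_two]
    exact this
  have hG0 : fderiv ℝ
      (fun q => (fderiv ℝ F q (0, 1, 0)) ^ 2
        - 4 * fderiv ℝ F q (1, 0, 0) * fderiv ℝ F q (0, 0, 1)) p = 0 := by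
    have hev : (fun q => (fderiv ℝ F q (0, 1, 0)) ^ 2
        - 4 * fderiv ℝ F q (1, 0, 0) * fderiv ℝ F q (0, 0, 1)) =ᶠ[nhds p] (fun _ => (0:ℝ)) := by
      filter_upwards [hU.mem_nhds hp] with q hq
      have := hdisc q hq; linarith
    rw [hev.fderiv_eq]
    exact fderiv_const_apply 0
  have hkey : ∀ w : ℝ × ℝ × ℝ,
      b * H (0,1,0) w + b * H (0,1,0) w - (4 * a * H (0,0,1) w + c * (4 * H (1,0,0) w)) = 0 := by
    intro w
    have h := hGd.fderiv
    rw [hG0] at h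
    have h2 := congrArg (fun (L : (ℝ × ℝ × ℝ) →L[ℝ] ℝ) => L w) h.symm
    simpa [hsymm w] using h2
  have h2c : (2:ℝ) * c ≠ 0 := by simpa using hc0
  have hCinv : HasFDerivAt (fun q => (2 * fderiv ℝ F q (0,0,1))⁻¹)
      ((-(((2*c)^2)⁻¹)) • ((2:ℝ) • H.flip (0,0,1))) p := by
    have := (hasDerivAt_inv h2c).comp_hasFDerivAt p ((hder (0,0,1)).const_mul 2)
    simpa only [Function.comp_def, neg_smul] using this
  have hlam : HasFDerivAt lam
      ((-b) • ((-(((2*c)^2)⁻¹)) • ((2:ℝ) • H.flip (0,0,1)))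
        + ((2*c)⁻¹) • (-(H.flip (0,1,0)))) p := by
    have := ((hder (0,1,0)).neg).mul hCinv
    simp only [neg_smul, Pi.neg_apply, ← hb, ← hc] at this
    simp only [neg_smul]
    refine HasFDerivAt.congr_of_eventuallyEq this (Filter.Eventually.of_forall fun q => ?_)
    simp [lam, div_eq_mul_inv]
  have hfl := hlam.fderiv
  set lp : ℝ := -b / (2 * c) with hlp
  have hlamp : lam p = lp := rfl
  have hval : ∀ w : ℝ × ℝ × ℝ, fderiv ℝ lam p w
      = (-b) * ((-(((2*c)^2)⁻¹)) * (2 * H w (0,0,1))) + (2*c)⁻¹ * (-(H w (0,1,0))) := by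
    intro w
    rw [hfl]
    simp only [ContinuousLinearMap.add_apply, ContinuousLinearMap.smul_apply,
      ContinuousLinearMap.neg_apply, ContinuousLinearMap.coe_smul', Pi.smul_apply,
      ContinuousLinearMap.flip_apply, smul_eq_mul]
  have hd2 : b ^ 2 = 4 * a * c := hdisc p hp
  have hC : ∀ w : ℝ × ℝ × ℝ,
      4*c^2*H (1,0,0) w - 2*b*c*H (0,1,0) w + b^2*H (0,0,1) w = 0 := by
    intro w
    linear_combination (-c) * hkey w + H (0,0,1) w * hd2
  have hC2 := hC (0,1,0)
  have hC3 := hC (0,0,1)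
  rw [hlamp, hval (1,0,0), hval (0,1,0), hval (0,0,1), hlp]
  have hsymm12 : H (1,0,0) (0,1,0) = H (0,1,0) (1,0,0) := hsymm _ _
  have hsymm13 : H (1,0,0) (0,0,1) = H (0,0,1) (1,0,0) := hsymm _ _
  field_simp
  ring_nf
  linear_combination b * hC3 - c * hC2
end

section
/- Let h1, h2, e11, e12, e22 be real numbers with h1 ≠ 0, h2 ≠ 0 and 4·h1 + h2² ≠ 0. Then the three equations (i) 2·e11·h1 + e11·h2² − 2·h1·h2·e12 + 2·h1²·e22 = 0, (ii) 4·e12·h1 − h2·e11 + h2·h1·e22 = 0, (iii) 2·h1·e22 + e22·h2² + 2·e11 + 2·h2·e12 = 0 hold simultaneously if and only if e11 + h1·e22 = 0 and 2·e12 + h2·e22 = 0. -/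
/-- with `h1 ≠ 0`, `h2 ≠ 0` and `4h1 + h2² ≠ 0`, the three equations
expressing the vanishing of the trace-free second fundamental form of the graph surface
hold simultaneously iff the completely exceptional system
`e11 + h1·e22 = 0`, `2e12 + h2·e22 = 0` holds. -/
theorem traceFree_secondFundamentalForm_iff_completely_exceptional
    (h1 h2 e11 e12 e22 : ℝ) (hh1 : h1 ≠ 0) (hh2 : h2 ≠ 0) (hnd : 4 * h1 + h2 ^ 2 ≠ 0) :
    (2 * e11 * h1 + e11 * h2 ^ 2 - 2 * h1 * h2 * e12 + 2 * h1 ^ 2 * e22 = 0 ∧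
     4 * e12 * h1 - h2 * e11 + h2 * h1 * e22 = 0 ∧
     2 * h1 * e22 + e22 * h2 ^ 2 + 2 * e11 + 2 * h2 * e12 = 0) ↔
    (e11 + h1 * e22 = 0 ∧ 2 * e12 + h2 * e22 = 0) := by
  constructor
  · rintro ⟨h₁, h₂, h₃⟩
    have hB : 2 * e12 + h2 * e22 = 0 := by
      have key : (4 * h1 + h2 ^ 2) * (2 * e12 + h2 * e22) = 0 := by
        linear_combination h2 * h₃ + 2 * h₂
      exact (mul_eq_zero.mp key).resolve_left hnd
    have hA : e11 + h1 * e22 = 0 := by linear_combination (h₃ - h2 * hB) / 2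
    exact ⟨hA, hB⟩
  · rintro ⟨hA, hB⟩
    refine ⟨?_, ?_, ?_⟩
    · linear_combination (2 * h1 + h2 ^ 2) * hA - h1 * h2 * hB
    · linear_combination (-h2) * hA + 2 * h1 * hB
    · linear_combination 2 * hA + h2 * hB
end

section
/- Let f : ℝ³ → ℝ be a smooth function of variables (a,b,c). Then the following are equivalent: (i) for every (a,b,c) ∈ ℝ³ and every (s,t) ∈ ℝ², the second derivative of the function τ ↦ f(a + τ·s², b + τ·s·t, c + τ·t²) vanishes identically; (ii) there exist real constants k0, k1, k2, k3, k4 such that f(a,b,c) = k0·(a·c − b²) + k1·a + k2·b + k3·c + k4 for all (a,b,c) ∈ ℝ³. -/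
/-- A smooth function on ℝ with vanishing second derivative is affine. -/
lemma affine_of_iteratedDeriv2 (F : ℝ → ℝ) (hF : ContDiff ℝ (⊤:ℕ∞) F)
    (h : ∀ τ, iteratedDeriv 2 F τ = 0) : ∀ τ, F τ = F 0 + (F 1 - F 0) * τ := by
  have hsplit := (contDiff_infty_iff_deriv.mp hF)
  have hFd : Differentiable ℝ F := hsplit.1
  have hFd' : Differentiable ℝ (deriv F) := (contDiff_infty_iff_deriv.mp hsplit.2).1
  have h2 : ∀ τ, deriv (deriv F) τ = 0 := by
    intro τ
    have := h τ
    rwa [iteratedDeriv_succ, iteratedDeriv_one] at this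
  have hconst : ∀ x, deriv F x = deriv F 0 :=
    fun x => is_const_of_deriv_eq_zero hFd' h2 x 0
  set m := deriv F 0 with hm
  have hG : ∀ x y : ℝ, F x - m * x = F y - m * y := by
    apply is_const_of_deriv_eq_zero
    · exact hFd.sub (differentiable_id.const_mul m)
    · intro x
      have h1 : HasDerivAt (fun x : ℝ => F x - m * x) (deriv F x - m * 1) x :=
        (hFd x).hasDerivAt.sub ((hasDerivAt_id x).const_mul m)
      rw [h1.deriv, hconst x]
      ring
  have key : ∀ x : ℝ, F x = F 0 + m * x := by
    intro x
    have := hG x 0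
    linarith [this]
  intro τ
  have h1 := key 1
  have hτ := key τ
  rw [hτ, h1]; ring

/-- A differentiable function satisfying the Jensen-type midpoint equation is affine. -/
lemma affine_of_jensen (g : ℝ → ℝ) (hg : Differentiable ℝ g)
    (h : ∀ b u : ℝ, g (b + u) + g (b - u) = 2 * g b) :
    ∀ x, g x = g 0 + (g 1 - g 0) * x := by
  have hd : ∀ p q : ℝ, deriv g p = deriv g q := by
    intro p q
    set b := (p + q) / 2
    set u0 := (p - q) / 2
    have hfun : (fun u : ℝ => g (b + u) + g (b - u)) = fun _ => 2 * g b := by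
      funext u; exact h b u
    have h1 : HasDerivAt (fun u : ℝ => g (b + u)) (deriv g (b + u0) * 1) u0 :=
      (hg (b + u0)).hasDerivAt.comp u0 ((hasDerivAt_id u0).const_add b)
    have h2 : HasDerivAt (fun u : ℝ => g (b - u)) (deriv g (b - u0) * (-1)) u0 :=
      (hg (b - u0)).hasDerivAt.comp u0 ((hasDerivAt_id u0).const_sub b)
    have h3 : HasDerivAt (fun u : ℝ => g (b + u) + g (b - u))
        (deriv g (b + u0) * 1 + deriv g (b - u0) * (-1)) u0 := h1.add h2
    rw [hfun] at h3
    have h4 : deriv g (b + u0) * 1 + deriv g (b - u0) * (-1) = 0 := by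
      have := h3.deriv
      rw [deriv_const] at this; linarith
    have hbp : b + u0 = p := by simp only [b, u0]; ring
    have hbq : b - u0 = q := by simp only [b, u0]; ring
    rw [hbp, hbq] at h4
    linarith
  set m := deriv g 0 with hm
  have hG : ∀ x y : ℝ, g x - m * x = g y - m * y := by
    apply is_const_of_deriv_eq_zero
    · exact hg.sub (differentiable_id.const_mul m)
    · intro x
      have h1 : HasDerivAt (fun x : ℝ => g x - m * x) (deriv g x - m * 1) x :=
        (hg x).hasDerivAt.sub ((hasDerivAt_id x).const_mul m)
      rw [h1.deriv, hd x 0, ← hm]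
      ring
  have key : ∀ x : ℝ, g x = g 0 + m * x := by
    intro x; have := hG x 0; linarith
  intro x
  have h1 := key 1
  have hx := key x
  rw [hx, h1]; ring

/-- n = 2, r = 1 case of the BGG characterisation: a smooth function
`f(a,b,c)` on `ℝ³` has vanishing second derivative along all rank-one directions
`(s², st, t²)` if and only if `f(a,b,c) = k0(ac − b²) + k1·a + k2·b + k3·c + k4`
for some real constants `k0, …, k4`, i.e. iff `f` cuts out a Monge–Ampère equation. -/
theorem second_derivative_vanishes_on_rank_one_iff_mongeAmpere
    (f : ℝ × ℝ × ℝ → ℝ) (hf : ContDiff ℝ (⊤ : ℕ∞) f) :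
    (∀ a b c s t : ℝ, ∀ τ : ℝ,
        iteratedDeriv 2 (fun τ' : ℝ => f (a + τ' * s ^ 2, b + τ' * (s * t), c + τ' * t ^ 2)) τ
          = 0) ↔
    (∃ k0 k1 k2 k3 k4 : ℝ, ∀ a b c : ℝ,
        f (a, b, c) = k0 * (a * c - b ^ 2) + k1 * a + k2 * b + k3 * c + k4) := by
  constructor
  · intro H
    -- Step 1: f is affine along every rank-one direction
    have hA : ∀ a b c s t τ : ℝ, f (a + τ * s ^ 2, b + τ * (s * t), c + τ * t ^ 2)
        = f (a, b, c) + (f (a + s ^ 2, b + s * t, c + t ^ 2) - f (a, b, c)) * τ := by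
      intro a b c s t τ
      have hcurve : ContDiff ℝ (⊤ : ℕ∞)
          (fun τ' : ℝ => ((a + τ' * s ^ 2, b + τ' * (s * t), c + τ' * t ^ 2) : ℝ × ℝ × ℝ)) := by
        refine ContDiff.prodMk ?_ (ContDiff.prodMk ?_ ?_) <;>
          exact contDiff_const.add (contDiff_id.mul contDiff_const)
      have hFc := hf.comp hcurve
      have h := affine_of_iteratedDeriv2 _ hFc (H a b c s t) τ
      simpa using h
    -- Step 2: the symmetric (Jensen-type) equation along directions (1, t, t²)
    have hE : ∀ a b c t τ : ℝ,
        f (a + τ, b + τ * t, c + τ * t ^ 2) + f (a - τ, b - τ * t, c - τ * t ^ 2)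
          = 2 * f (a, b, c) := by
      intro a b c t τ
      have h1 := hA a b c 1 t τ
      have h2 := hA a b c 1 t (-τ)
      have e1 : (a + τ * (1:ℝ) ^ 2, b + τ * (1 * t), c + τ * t ^ 2)
          = ((a + τ, b + τ * t, c + τ * t ^ 2) : ℝ × ℝ × ℝ) := by norm_num
      have e2 : (a + (-τ) * (1:ℝ) ^ 2, b + (-τ) * (1 * t), c + (-τ) * t ^ 2)
          = ((a - τ, b - τ * t, c - τ * t ^ 2) : ℝ × ℝ × ℝ) := by
        refine Prod.ext (by ring) (Prod.ext (by ring) (by ring))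
      rw [e1] at h1
      rw [e2] at h2
      linarith
    -- affine in the first and third coordinates
    have ha : ∀ y z x : ℝ, f (x, y, z) = f (0, y, z) + (f (1, y, z) - f (0, y, z)) * x := by
      intro y z x
      have h := hA 0 y z 1 0 x
      have e1 : ((0:ℝ) + x * (1:ℝ) ^ 2, y + x * (1 * 0), z + x * (0:ℝ) ^ 2)
          = ((x, y, z) : ℝ × ℝ × ℝ) := by
        refine Prod.ext (by ring) (Prod.ext (by ring) (by ring))
      have e2 : ((0:ℝ) + (1:ℝ) ^ 2, y + 1 * 0, z + (0:ℝ) ^ 2) = ((1, y, z) : ℝ × ℝ × ℝ) := by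
        refine Prod.ext (by ring) (Prod.ext (by ring) (by ring))
      rw [e1, e2] at h
      exact h
    have hc : ∀ x y z : ℝ, f (x, y, z) = f (x, y, 0) + (f (x, y, 1) - f (x, y, 0)) * z := by
      intro x y z
      have h := hA x y 0 0 1 z
      have e1 : (x + z * (0:ℝ) ^ 2, y + z * (0 * 1), (0:ℝ) + z * (1:ℝ) ^ 2)
          = ((x, y, z) : ℝ × ℝ × ℝ) := by
        refine Prod.ext (by ring) (Prod.ext (by ring) (by ring))
      have e2 : (x + (0:ℝ) ^ 2, y + 0 * 1, (0:ℝ) + (1:ℝ) ^ 2) = ((x, y, 1) : ℝ × ℝ × ℝ) := by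
        refine Prod.ext (by ring) (Prod.ext (by ring) (by ring))
      rw [e1, e2] at h
      exact h
    -- differentiability of slices
    have hsl : ∀ p q : ℝ, Differentiable ℝ (fun y : ℝ => f (p, y, q)) := by
      intro p q
      exact (hf.comp (contDiff_const.prodMk (contDiff_id.prodMk contDiff_const))).differentiable
        (by simp)
    -- the four coefficient functions
    obtain ⟨α, hαd, hα⟩ : ∃ α : ℝ → ℝ, Differentiable ℝ α ∧ ∀ y, α y = f (0, y, 0) :=
      ⟨_, hsl 0 0, fun _ => rfl⟩
    obtain ⟨β, hβd, hβ⟩ : ∃ β : ℝ → ℝ, Differentiable ℝ β ∧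
        ∀ y, β y = f (1, y, 0) - f (0, y, 0) := ⟨_, (hsl 1 0).sub (hsl 0 0), fun _ => rfl⟩
    obtain ⟨γ, hγd, hγ⟩ : ∃ γ : ℝ → ℝ, Differentiable ℝ γ ∧
        ∀ y, γ y = f (0, y, 1) - f (0, y, 0) := ⟨_, (hsl 0 1).sub (hsl 0 0), fun _ => rfl⟩
    obtain ⟨δ, hδd, hδ⟩ : ∃ δ : ℝ → ℝ, Differentiable ℝ δ ∧
        ∀ y, δ y = f (1, y, 1) - f (0, y, 1) - f (1, y, 0) + f (0, y, 0) :=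
      ⟨_, (((hsl 1 1).sub (hsl 0 1)).sub (hsl 1 0)).add (hsl 0 0), fun _ => rfl⟩
    -- the representation f(x,y,z) = α(y) + x β(y) + z γ(y) + x z δ(y)
    have hrep : ∀ x y z : ℝ, f (x, y, z) = α y + x * β y + z * γ y + x * z * δ y := by
      intro x y z
      rw [hc x y z, ha y 0 x, ha y 1 x, hα, hβ, hγ, hδ]
      ring
    -- δ satisfies Jensen
    have hδJ : ∀ b u : ℝ, δ (b + u) + δ (b - u) = 2 * δ b := by
      intro b u
      have e00 := hE 0 b 0 1 u
      have e10 := hE 1 b 0 1 u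
      have e01 := hE 0 b 1 1 u
      have e11 := hE 1 b 1 1 u
      simp only [hrep] at e00 e10 e01 e11
      ring_nf at e00 e10 e01 e11 ⊢
      linarith
    obtain ⟨d0, d1, hδl⟩ : ∃ d0 d1 : ℝ, ∀ x, δ x = d0 + d1 * x :=
      ⟨δ 0, δ 1 - δ 0, fun x => by rw [affine_of_jensen δ hδd hδJ x]⟩
    -- the slope of δ vanishes
    have hd1 : d1 = 0 := by
      have e10a := hE 1 0 0 1 1
      have e00a := hE 0 0 0 1 1
      have e10b := hE 1 0 0 (-1) (-1)
      have e00b := hE 0 0 0 (-1) (-1)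
      simp only [hrep, hδl] at e10a e00a e10b e00b
      ring_nf at e10a e00a e10b e00b
      linarith
    have hδc : ∀ x, δ x = d0 := by
      intro x; rw [hδl x, hd1]; ring
    -- β satisfies Jensen
    have hβJ : ∀ b u : ℝ, β (b + u) + β (b - u) = 2 * β b := by
      intro b u
      have e10 := hE 1 b 0 1 u
      have e00 := hE 0 b 0 1 u
      simp only [hrep, hδc] at e10 e00
      ring_nf at e10 e00 ⊢
      linarith
    obtain ⟨e0, e1, hβl⟩ : ∃ e0 e1 : ℝ, ∀ x, β x = e0 + e1 * x :=
      ⟨β 0, β 1 - β 0, fun x => by rw [affine_of_jensen β hβd hβJ x]⟩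
    -- γ satisfies Jensen
    have hγJ : ∀ b u : ℝ, γ (b + u) + γ (b - u) = 2 * γ b := by
      intro b u
      have e01 := hE 0 b 1 1 u
      have e00 := hE 0 b 0 1 u
      simp only [hrep, hδc] at e01 e00
      ring_nf at e01 e00 ⊢
      linarith
    obtain ⟨g0, g1, hγl⟩ : ∃ g0 g1 : ℝ, ∀ x, γ x = g0 + g1 * x :=
      ⟨γ 0, γ 1 - γ 0, fun x => by rw [affine_of_jensen γ hγd hγJ x]⟩
    -- the slopes of β and γ vanish
    have hbg : e1 = 0 ∧ g1 = 0 := by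
      have eA := hE 0 0 0 1 1
      have eB := hE 0 0 0 (-1) (-1)
      have eC := hE 0 0 0 2 (1/2)
      simp only [hrep, hδc, hβl, hγl] at eA eB eC
      ring_nf at eA eB eC
      constructor <;> linarith
    have hβc : ∀ x, β x = e0 := by intro x; rw [hβl x, hbg.1]; ring
    have hγc : ∀ x, γ x = g0 := by intro x; rw [hγl x, hbg.2]; ring
    -- α plus δ0·b² satisfies Jensen
    obtain ⟨α', hα'd, hα'⟩ : ∃ α' : ℝ → ℝ, Differentiable ℝ α' ∧
        ∀ y, α' y = α y + δ 0 * y ^ 2 :=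
      ⟨_, hαd.add ((differentiable_id.pow 2).const_mul (δ 0)), fun _ => rfl⟩
    have hα'J : ∀ b u : ℝ, α' (b + u) + α' (b - u) = 2 * α' b := by
      intro b u
      have e00 := hE 0 b 0 1 u
      simp only [hrep, hδc, hβc, hγc] at e00
      simp only [hα', hδc]
      ring_nf at e00 ⊢
      linarith
    obtain ⟨p0, p1, hα'l⟩ : ∃ p0 p1 : ℝ, ∀ x, α' x = p0 + p1 * x :=
      ⟨α' 0, α' 1 - α' 0, fun x => by rw [affine_of_jensen α' hα'd hα'J x]⟩
    refine ⟨d0, e0, p1, g0, p0, ?_⟩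
    intro a b c
    have hab : α b = p0 + p1 * b - d0 * b ^ 2 := by
      have h2 := hα'l b
      rw [hα', hδc] at h2
      linarith
    rw [hrep a b c, hab, hδc, hβc, hγc]
    ring
  · rintro ⟨k0, k1, k2, k3, k4, hk⟩ a b c s t τ
    have heq : (fun τ' : ℝ => f (a + τ' * s ^ 2, b + τ' * (s * t), c + τ' * t ^ 2))
        = fun τ' : ℝ => (k0 * (a * c - b ^ 2) + k1 * a + k2 * b + k3 * c + k4)
            + (k0 * (a * t ^ 2 + c * s ^ 2 - 2 * b * (s * t)) + k1 * s ^ 2 + k2 * (s * t)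
              + k3 * t ^ 2) * τ' := by
      funext τ'
      rw [hk]
      ring
    rw [heq, iteratedDeriv_succ, iteratedDeriv_one]
    have hd : deriv (fun τ' : ℝ => (k0 * (a * c - b ^ 2) + k1 * a + k2 * b + k3 * c + k4)
        + (k0 * (a * t ^ 2 + c * s ^ 2 - 2 * b * (s * t)) + k1 * s ^ 2 + k2 * (s * t)
          + k3 * t ^ 2) * τ')
        = fun _ : ℝ => (k0 * (a * t ^ 2 + c * s ^ 2 - 2 * b * (s * t)) + k1 * s ^ 2
          + k2 * (s * t) + k3 * t ^ 2) := by
      funext x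
      have : HasDerivAt (fun τ' : ℝ => (k0 * (a * c - b ^ 2) + k1 * a + k2 * b + k3 * c + k4)
          + (k0 * (a * t ^ 2 + c * s ^ 2 - 2 * b * (s * t)) + k1 * s ^ 2 + k2 * (s * t)
            + k3 * t ^ 2) * τ')
          ((k0 * (a * t ^ 2 + c * s ^ 2 - 2 * b * (s * t)) + k1 * s ^ 2 + k2 * (s * t)
            + k3 * t ^ 2) * 1) x :=
        (((hasDerivAt_id x).const_mul _).const_add _)
      simpa using this.deriv
    rw [hd]
    simp
end
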